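/- Under the hypotheses of the main bound (inexact KM iteration with $x_n \in C$, $\|Tx_n - x_0\| \leq \kappa$), if $\tau_n = \sum_{k=1}^n \alpha_k(1-\alpha_k) \to \infty$, $\|e_n\| \to 0$, and $\sum_{k \geq 1} \alpha_k \|e_k\| < \infty$, then $\|x_n - Tx_n\| \to 0$. -/

import Mathlib

open Finset Filter

namespace KM6
open Real
variable (b : ℕ → ℝ)

def qk : ℕ → ℕ → ℝ
  | 0, j => if j = 0 then 1 else 0
  | (n+1), j => (1 - b (n+1)) * qk n j + b (n+1) * (if j = 0 then 0 else qk n (j-1))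

variable {b}

lemma qk_zero_of_lt {n j : ℕ} (h : n < j) : qk b n j = 0 := by
  induction n generalizing j with
  | zero => simp only [qk]; rw [if_neg (by omega)]
  | succ n ih => simp only [qk]; rw [ih (by omega), if_neg (by omega), ih (by omega)]; ring

lemma sum_shift (F : ℕ → ℝ) (N : ℕ) :
    ∑ i ∈ range (N+1), (if i = 0 then 0 else F i) = ∑ i ∈ range N, F (i+1) := by
  rw [Finset.sum_range_succ']; simp

lemma qk_sum (n : ℕ) : ∑ j ∈ range (n+1), qk b n j = 1 := by
  induction n with
  | zero => simp [qk]
  | succ n ih =>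
    simp only [qk]
    rw [Finset.sum_add_distrib, ← Finset.mul_sum, ← Finset.mul_sum]
    have e1 : ∑ j ∈ range (n+2), qk b n j = 1 := by
      rw [Finset.sum_range_succ, qk_zero_of_lt (by omega), ih]; ring
    have e2 : ∑ j ∈ range (n+2), (if j = 0 then 0 else qk b n (j-1)) = 1 := by
      rw [sum_shift (fun j => qk b n (j-1)) (n+1)]; simpa using ih
    rw [e1, e2]; ring

variable (b)

def Lk (t : ℤ) (n m : ℕ) : ℝ :=
  ∑ j ∈ range (n+1), ∑ i ∈ range (m+1),
    (if (j:ℤ) ≤ (i:ℤ) + t then qk b n j * qk b m i else 0)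

def Phi (n m : ℕ) : ℝ := 1 - Lk b 0 n m - Lk b (-1) n m
def Del (n m : ℕ) : ℝ := 1 - Lk b (-1) n m - Lk b (-2) n m

variable {b}

lemma Lk_rec_n (t : ℤ) (n m : ℕ) :
    Lk b t (n+1) m = (1 - b (n+1)) * Lk b t n m + b (n+1) * Lk b (t-1) n m := by
  unfold Lk
  have step : ∀ j ∈ range (n+2), ∑ i ∈ range (m+1),
      (if (j:ℤ) ≤ (i:ℤ) + t then qk b (n+1) j * qk b m i else 0)
      = (1 - b (n+1)) * (∑ i ∈ range (m+1), (if (j:ℤ) ≤ (i:ℤ) + t then qk b n j * qk b m i else 0))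
        + b (n+1) * (if j = 0 then 0 else
            ∑ i ∈ range (m+1), (if (j:ℤ) ≤ (i:ℤ) + t then qk b n (j-1) * qk b m i else 0)) := by
    intro j _
    by_cases hj : j = 0
    · subst hj
      rw [if_pos rfl, mul_zero, add_zero, Finset.mul_sum]
      apply Finset.sum_congr rfl
      intro i _
      simp only [qk, reduceIte]
      split <;> ring
    · rw [if_neg hj, Finset.mul_sum, Finset.mul_sum, ← Finset.sum_add_distrib]
      apply Finset.sum_congr rfl
      intro i _
      simp only [qk, if_neg hj]
      split <;> ring
  rw [Finset.sum_congr rfl step, Finset.sum_add_distrib, ← Finset.mul_sum, ← Finset.mul_sum]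
  congr 1
  · congr 1
    rw [Finset.sum_range_succ]
    have hz : ∑ i ∈ range (m+1),
        (if ((n+1:ℕ):ℤ) ≤ (i:ℤ) + t then qk b n (n+1) * qk b m i else 0) = 0 := by
      apply Finset.sum_eq_zero; intro i _
      rw [qk_zero_of_lt (b := b) (n := n) (j := n+1) (by omega)]
      split <;> ring
    rw [hz, add_zero]
  · congr 1
    rw [sum_shift (fun j => ∑ i ∈ range (m+1),
        (if (j:ℤ) ≤ (i:ℤ) + t then qk b n (j-1) * qk b m i else 0)) (n+1)]
    apply Finset.sum_congr rfl
    intro j _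
    apply Finset.sum_congr rfl
    intro i _
    have hc : (((j+1:ℕ)):ℤ) ≤ (i:ℤ) + t ↔ (j:ℤ) ≤ (i:ℤ) + (t-1) := by push_cast; omega
    simp only [Nat.add_sub_cancel]
    exact if_congr hc rfl rfl

lemma Lk_rec_m (t : ℤ) (n m : ℕ) :
    Lk b t n (m+1) = (1 - b (m+1)) * Lk b t n m + b (m+1) * Lk b (t+1) n m := by
  unfold Lk
  rw [Finset.mul_sum, Finset.mul_sum, ← Finset.sum_add_distrib]
  apply Finset.sum_congr rfl
  intro j _
  have step : ∀ i ∈ range (m+2),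
      (if (j:ℤ) ≤ (i:ℤ) + t then qk b n j * qk b (m+1) i else 0)
      = (1 - b (m+1)) * (if (j:ℤ) ≤ (i:ℤ) + t then qk b n j * qk b m i else 0)
        + b (m+1) * (if i = 0 then 0 else
            (if (j:ℤ) ≤ (i:ℤ) + t then qk b n j * qk b m (i-1) else 0)) := by
    intro i _
    by_cases hi : i = 0
    · subst hi
      rw [if_pos rfl, mul_zero, add_zero]
      simp only [qk, reduceIte]
      split <;> ring
    · simp only [qk, if_neg hi]
      split <;> ring
  rw [Finset.sum_congr rfl step, Finset.sum_add_distrib, ← Finset.mul_sum, ← Finset.mul_sum]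
  congr 1
  · congr 1
    rw [Finset.sum_range_succ]
    have hz : (if (j:ℤ) ≤ ((m+1:ℕ):ℤ) + t then qk b n j * qk b m (m+1) else 0) = 0 := by
      rw [qk_zero_of_lt (b := b) (n := m) (j := m+1) (by omega)]
      split <;> ring
    rw [hz, add_zero]
  · congr 1
    rw [sum_shift (fun i => if (j:ℤ) ≤ (i:ℤ) + t then qk b n j * qk b m (i-1) else 0) (m+1)]
    apply Finset.sum_congr rfl
    intro i _
    have hc : ((j:ℕ):ℤ) ≤ (((i+1:ℕ)):ℤ) + t ↔ (j:ℤ) ≤ (i:ℤ) + (t+1) := by push_cast; omega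
    simp only [Nat.add_sub_cancel]
    exact if_congr hc rfl rfl

lemma Lk_zero_right {t : ℤ} (ht : t < 0) (n : ℕ) : Lk b t n 0 = 0 := by
  unfold Lk
  apply Finset.sum_eq_zero; intro j _
  apply Finset.sum_eq_zero; intro i hi
  rw [Finset.mem_range] at hi
  have hi0 : i = 0 := by omega
  subst hi0
  rw [if_neg (by omega)]

lemma Del_zero (n : ℕ) : Del b n 0 = 1 := by
  unfold Del
  rw [Lk_zero_right (by norm_num), Lk_zero_right (by norm_num)]; ring

lemma Phi_rec (n m : ℕ) :
    Phi b (n+1) m = (1 - b (n+1)) * Phi b n m + b (n+1) * Del b n m := by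
  unfold Phi Del
  rw [Lk_rec_n 0 n m, Lk_rec_n (-1) n m]
  ring_nf

lemma Del_rec (n m : ℕ) :
    Del b n (m+1) = (1 - b (m+1)) * Del b n m + b (m+1) * Phi b n m := by
  unfold Phi Del
  rw [Lk_rec_m (-1) n m, Lk_rec_m (-2) n m]
  ring_nf

lemma one_eq_double_sum (n : ℕ) :
    (1:ℝ) = ∑ j ∈ range (n+1), ∑ i ∈ range (n+1), qk b n j * qk b n i := by
  rw [← Finset.sum_mul_sum, qk_sum, one_mul]

lemma Phi_diag (n : ℕ) : Phi b n n = 0 := by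
  have swap : Lk b (-1) n n
      = ∑ j ∈ range (n+1), ∑ i ∈ range (n+1),
          (if (i:ℤ) < (j:ℤ) then qk b n j * qk b n i else 0) := by
    unfold Lk
    rw [Finset.sum_comm]
    apply Finset.sum_congr rfl; intro j _
    apply Finset.sum_congr rfl; intro i _
    have hc : ((i:ℕ):ℤ) ≤ ((j:ℕ):ℤ) + (-1) ↔ (i:ℤ) < (j:ℤ) := by omega
    exact if_congr hc (mul_comm _ _) rfl
  unfold Phi
  rw [swap]
  have key : Lk b 0 n n + ∑ j ∈ range (n+1), ∑ i ∈ range (n+1),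
      (if (i:ℤ) < (j:ℤ) then qk b n j * qk b n i else 0) = 1 := by
    unfold Lk
    rw [← Finset.sum_add_distrib, one_eq_double_sum n]
    apply Finset.sum_congr rfl; intro j _
    rw [← Finset.sum_add_distrib]
    apply Finset.sum_congr rfl; intro i _
    by_cases h : (j:ℤ) ≤ (i:ℤ) + 0
    · rw [if_pos h, if_neg (by omega)]; ring
    · rw [if_neg h, if_pos (by omega)]; ring
  linarith

def rho (b : ℕ → ℝ) (n j : ℕ) : ℝ := ∑ i ∈ range (n+1), qk b n i * qk b n (i+j)

lemma Del_diag (n : ℕ) : Del b n n = rho b n 0 + rho b n 1 := by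
  have swap2 : Lk b (-2) n n
      = ∑ j ∈ range (n+1), ∑ i ∈ range (n+1),
          (if (i:ℤ) + 2 ≤ (j:ℤ) then qk b n j * qk b n i else 0) := by
    unfold Lk
    rw [Finset.sum_comm]
    apply Finset.sum_congr rfl; intro j _
    apply Finset.sum_congr rfl; intro i _
    have hc : ((i:ℕ):ℤ) ≤ ((j:ℕ):ℤ) + (-2) ↔ (i:ℤ) + 2 ≤ (j:ℤ) := by omega
    exact if_congr hc (mul_comm _ _) rfl
  have swap1 : Lk b (-1) n n
      = ∑ j ∈ range (n+1), ∑ i ∈ range (n+1),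
          (if (j:ℤ) < (i:ℤ) then qk b n j * qk b n i else 0) := by
    unfold Lk
    apply Finset.sum_congr rfl; intro j _
    apply Finset.sum_congr rfl; intro i _
    have hc : ((j:ℕ):ℤ) ≤ ((i:ℕ):ℤ) + (-1) ↔ (j:ℤ) < (i:ℤ) := by omega
    exact if_congr hc rfl rfl
  have expand : Del b n n = ∑ j ∈ range (n+1), ∑ i ∈ range (n+1),
      ((if j = i then qk b n j * qk b n i else 0)
        + (if j = i+1 then qk b n j * qk b n i else 0)) := by
    unfold Del
    rw [swap1, swap2, one_eq_double_sum n]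
    rw [← Finset.sum_sub_distrib, ← Finset.sum_sub_distrib]
    apply Finset.sum_congr rfl; intro j _
    rw [← Finset.sum_sub_distrib, ← Finset.sum_sub_distrib]
    apply Finset.sum_congr rfl; intro i _
    have hji : ¬((j:ℤ) < (i:ℤ) ∧ (i:ℤ) + 2 ≤ (j:ℤ)) := by omega
    split_ifs <;> (try (exfalso; omega)) <;> ring
  rw [expand]
  simp only [Finset.sum_add_distrib]
  congr 1
  · -- diagonal part = rho n 0
    unfold rho
    apply Finset.sum_congr rfl; intro j _
    rw [Finset.sum_ite_eq (range (n+1)) j (fun i => qk b n j * qk b n i)]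
    rw [if_pos (by assumption), Nat.add_zero]
  · -- superdiagonal part = rho n 1
    rw [Finset.sum_comm]
    unfold rho
    apply Finset.sum_congr rfl; intro i hi
    rw [Finset.mem_range] at hi
    have : ∑ j ∈ range (n+1), (if j = i+1 then qk b n j * qk b n i else 0)
        = if i+1 ∈ range (n+1) then qk b n (i+1) * qk b n i else 0 := by
      rw [Finset.sum_ite_eq' (range (n+1)) (i+1) (fun j => qk b n j * qk b n i)]
    rw [this]
    by_cases h : i + 1 ∈ range (n+1)
    · rw [if_pos h]; ring
    · rw [if_neg h]
      rw [Finset.mem_range] at h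
      rw [qk_zero_of_lt (b := b) (n := n) (j := i+1) (by omega)]
      ring


variable (b : ℕ → ℝ)

def beta (i : ℕ) : ℝ := b i * (1 - b i)
def tauW (n : ℕ) : ℝ := ∑ i ∈ range n, beta b (i+1)
noncomputable def Pf (n : ℕ) (θ : ℝ) : ℝ := ∏ i ∈ range n, (1 - 2 * beta b (i+1) * (1 - Real.cos θ))
noncomputable def Jf (n j : ℕ) : ℝ := ∫ θ in (-π)..π, Real.cos (j*θ) * Pf b n θ

variable {b}

lemma beta_mem (hb : ∀ i, b i ∈ Set.Icc (0:ℝ) 1) (i : ℕ) :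
    0 ≤ beta b i ∧ beta b i ≤ 1/4 := by
  have h1 := (hb i).1; have h2 := (hb i).2
  constructor
  · exact mul_nonneg h1 (by linarith)
  · unfold beta; nlinarith [sq_nonneg (b i - 1/2)]

lemma Pf_succ (n : ℕ) (θ : ℝ) :
    Pf b (n+1) θ = Pf b n θ * (1 - 2 * beta b (n+1) * (1 - Real.cos θ)) := by
  unfold Pf; rw [Finset.prod_range_succ]

lemma Pf_continuous (n : ℕ) : Continuous (Pf b n) := by
  unfold Pf
  apply continuous_finset_prod
  intro i _
  continuity

lemma Pf_nonneg (hb : ∀ i, b i ∈ Set.Icc (0:ℝ) 1) (n : ℕ) (θ : ℝ) : 0 ≤ Pf b n θ := by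
  unfold Pf
  apply Finset.prod_nonneg
  intro i _
  have h1 := (beta_mem hb (i+1)).1
  have h2 := (beta_mem hb (i+1)).2
  have hc1 := Real.neg_one_le_cos θ
  have hc2 := Real.cos_le_one θ
  nlinarith

lemma Pf_le_one (hb : ∀ i, b i ∈ Set.Icc (0:ℝ) 1) (n : ℕ) (θ : ℝ) : Pf b n θ ≤ 1 := by
  unfold Pf
  apply Finset.prod_le_one
  · intro i _
    have h1 := (beta_mem hb (i+1)).1
    have h2 := (beta_mem hb (i+1)).2
    have hc1 := Real.neg_one_le_cos θ
    have hc2 := Real.cos_le_one θ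
    nlinarith
  · intro i _
    have h1 := (beta_mem hb (i+1)).1
    have hc2 := Real.cos_le_one θ
    nlinarith

lemma Pf_le_inv (hb : ∀ i, b i ∈ Set.Icc (0:ℝ) 1) (n : ℕ) (θ : ℝ) :
    Pf b n θ ≤ (1 + 2 * tauW b n * (1 - Real.cos θ))⁻¹ := by
  have hc2 := Real.cos_le_one θ
  have hc1 := Real.neg_one_le_cos θ
  induction n with
  | zero => unfold Pf tauW; simp
  | succ n ih =>
    have hβ1 := (beta_mem hb (n+1)).1
    have hβ2 := (beta_mem hb (n+1)).2
    have hτ : 0 ≤ tauW b n := by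
      unfold tauW
      exact Finset.sum_nonneg (fun i _ => (beta_mem hb (i+1)).1)
    have hden : (0:ℝ) < 1 + 2 * tauW b n * (1 - Real.cos θ) := by nlinarith
    have hx1 : 0 ≤ 2 * beta b (n+1) * (1 - Real.cos θ) := by nlinarith
    have hx2 : 2 * beta b (n+1) * (1 - Real.cos θ) ≤ 1 := by nlinarith
    have hτs : tauW b (n+1) = tauW b n + beta b (n+1) := by
      unfold tauW; rw [Finset.sum_range_succ]
    have hden2 : (0:ℝ) < 1 + 2 * tauW b (n+1) * (1 - Real.cos θ) := by
      rw [hτs]; nlinarith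
    rw [Pf_succ]
    calc Pf b n θ * (1 - 2 * beta b (n+1) * (1 - Real.cos θ))
        ≤ (1 + 2 * tauW b n * (1 - Real.cos θ))⁻¹ * (1 - 2 * beta b (n+1) * (1 - Real.cos θ)) := by
          apply mul_le_mul_of_nonneg_right ih (by linarith)
      _ ≤ (1 + 2 * tauW b (n+1) * (1 - Real.cos θ))⁻¹ := by
          rw [hτs]
          have h2' : (0:ℝ) < 1 + 2 * (tauW b n + beta b (n+1)) * (1 - Real.cos θ) := by
            nlinarith
          have hA : (0:ℝ) ≤ 2 * tauW b n * (1 - Real.cos θ) := by nlinarith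
          have hrw : (1 + 2 * tauW b n * (1 - Real.cos θ))⁻¹ * (1 - 2 * beta b (n+1) * (1 - Real.cos θ))
              = (1 - 2 * beta b (n+1) * (1 - Real.cos θ)) / (1 + 2 * tauW b n * (1 - Real.cos θ)) := by
            ring
          rw [hrw, inv_eq_one_div, div_le_div_iff₀ hden h2']
          nlinarith
    

lemma rho_range {n j : ℕ} (N : ℕ) (h : n+1 ≤ N) :
    rho b n j = ∑ i ∈ range N, qk b n i * qk b n (i+j) := by
  unfold rho
  apply Finset.sum_subset (Finset.range_subset_range.mpr h)
  intro i _ hi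
  rw [Finset.mem_range] at hi
  rw [qk_zero_of_lt (b := b) (n := n) (j := i) (by omega), zero_mul]

lemma rho_expand (n j : ℕ) (c : ℝ) (hc : c = b (n+1)) :
    rho b (n+1) j
      = (1-c)^2 * (∑ i ∈ range (n+2), qk b n i * qk b n (i+j))
        + (1-c)*c * (∑ i ∈ range (n+2), qk b n i * (if i+j = 0 then 0 else qk b n (i+j-1)))
        + c*(1-c) * (∑ i ∈ range (n+2), (if i = 0 then 0 else qk b n (i-1)) * qk b n (i+j))
        + c^2 * (∑ i ∈ range (n+2), (if i = 0 then 0 else qk b n (i-1)) * (if i+j = 0 then 0 else qk b n (i+j-1))) := by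
  unfold rho
  rw [Finset.mul_sum, Finset.mul_sum, Finset.mul_sum, Finset.mul_sum,
    ← Finset.sum_add_distrib, ← Finset.sum_add_distrib, ← Finset.sum_add_distrib]
  apply Finset.sum_congr rfl
  intro i _
  show qk b (n+1) i * qk b (n+1) (i+j) = _
  simp only [qk]
  rw [← hc]
  ring

lemma rho_rec_zero (n : ℕ) :
    rho b (n+1) 0 = (1 - 2 * beta b (n+1)) * rho b n 0 + 2 * beta b (n+1) * rho b n 1 := by
  set c := b (n+1) with hc
  rw [rho_expand n 0 c hc]
  have S1 : (∑ i ∈ range (n+2), qk b n i * qk b n (i+0)) = rho b n 0 :=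
    (rho_range (n+2) (by omega)).symm
  have S2 : (∑ i ∈ range (n+2), qk b n i * (if i+0 = 0 then 0 else qk b n (i+0-1)))
      = rho b n 1 := by
    have e : ∀ i, qk b n i * (if i+0 = 0 then 0 else qk b n (i+0-1))
        = (if i = 0 then 0 else qk b n i * qk b n (i-1)) := by
      intro i; by_cases hi : i = 0 <;> simp [hi]
    rw [Finset.sum_congr rfl (fun i _ => e i),
      sum_shift (fun i => qk b n i * qk b n (i-1)) (n+1)]
    unfold rho
    apply Finset.sum_congr rfl
    intro i _
    simp only [Nat.add_sub_cancel]
    ring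
  have S3 : (∑ i ∈ range (n+2), (if i = 0 then 0 else qk b n (i-1)) * qk b n (i+0))
      = rho b n 1 := by
    have e : ∀ i, (if i = 0 then 0 else qk b n (i-1)) * qk b n (i+0)
        = (if i = 0 then 0 else qk b n (i-1) * qk b n i) := by
      intro i; by_cases hi : i = 0 <;> simp [hi]
    rw [Finset.sum_congr rfl (fun i _ => e i),
      sum_shift (fun i => qk b n (i-1) * qk b n i) (n+1)]
    unfold rho
    apply Finset.sum_congr rfl
    intro i _
    simp only [Nat.add_sub_cancel]
  have S4 : (∑ i ∈ range (n+2), (if i = 0 then 0 else qk b n (i-1)) * (if i+0 = 0 then 0 else qk b n (i+0-1)))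
      = rho b n 0 := by
    have e : ∀ i, (if i = 0 then 0 else qk b n (i-1)) * (if i+0 = 0 then 0 else qk b n (i+0-1))
        = (if i = 0 then 0 else qk b n (i-1) * qk b n (i-1)) := by
      intro i; by_cases hi : i = 0 <;> simp [hi]
    rw [Finset.sum_congr rfl (fun i _ => e i),
      sum_shift (fun i => qk b n (i-1) * qk b n (i-1)) (n+1)]
    unfold rho
    apply Finset.sum_congr rfl
    intro i _
    simp
  rw [S1, S2, S3, S4]
  unfold beta
  rw [← hc]
  ring

lemma rho_rec_succ (n j : ℕ) :
    rho b (n+1) (j+1) = (1 - 2 * beta b (n+1)) * rho b n (j+1)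
      + beta b (n+1) * rho b n j + beta b (n+1) * rho b n (j+2) := by
  set c := b (n+1) with hc
  rw [rho_expand n (j+1) c hc]
  have S1 : (∑ i ∈ range (n+2), qk b n i * qk b n (i+(j+1))) = rho b n (j+1) :=
    (rho_range (n+2) (by omega)).symm
  have S2 : (∑ i ∈ range (n+2), qk b n i * (if i+(j+1) = 0 then 0 else qk b n (i+(j+1)-1)))
      = rho b n j := by
    have e : ∀ i, qk b n i * (if i+(j+1) = 0 then 0 else qk b n (i+(j+1)-1))
        = qk b n i * qk b n (i+j) := by
      intro i
      rw [if_neg (by omega)]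
      have h : i+(j+1)-1 = i+j := by omega
      rw [h]
    rw [Finset.sum_congr rfl (fun i _ => e i), ← rho_range (n+2) (by omega)]
  have S3 : (∑ i ∈ range (n+2), (if i = 0 then 0 else qk b n (i-1)) * qk b n (i+(j+1)))
      = rho b n (j+2) := by
    have e : ∀ i, (if i = 0 then 0 else qk b n (i-1)) * qk b n (i+(j+1))
        = (if i = 0 then 0 else qk b n (i-1) * qk b n (i+(j+1))) := by
      intro i; by_cases hi : i = 0 <;> simp [hi]
    rw [Finset.sum_congr rfl (fun i _ => e i),
      sum_shift (fun i => qk b n (i-1) * qk b n (i+(j+1))) (n+1)]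
    unfold rho
    apply Finset.sum_congr rfl
    intro i _
    simp only [Nat.add_sub_cancel]
    congr 2
    omega
  have S4 : (∑ i ∈ range (n+2), (if i = 0 then 0 else qk b n (i-1)) * (if i+(j+1) = 0 then 0 else qk b n (i+(j+1)-1)))
      = rho b n (j+1) := by
    have e : ∀ i, (if i = 0 then 0 else qk b n (i-1)) * (if i+(j+1) = 0 then 0 else qk b n (i+(j+1)-1))
        = (if i = 0 then 0 else qk b n (i-1) * qk b n (i+(j+1)-1)) := by
      intro i; by_cases hi : i = 0 <;> simp [hi]
    rw [Finset.sum_congr rfl (fun i _ => e i),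
      sum_shift (fun i => qk b n (i-1) * qk b n (i+(j+1)-1)) (n+1)]
    unfold rho
    apply Finset.sum_congr rfl
    intro i _
    simp only [Nat.add_sub_cancel]
    congr 2
    omega
  rw [S1, S2, S3, S4]
  unfold beta
  rw [← hc]
  ring


lemma cos_mul_continuous (a : ℝ) : Continuous (fun θ : ℝ => Real.cos (a*θ)) := by
  continuity

lemma integrable_cos_Pf (n : ℕ) (a x y : ℝ) :
    IntervalIntegrable (fun θ => Real.cos (a*θ) * Pf b n θ) MeasureTheory.volume x y :=
  ((cos_mul_continuous a).mul (Pf_continuous n)).intervalIntegrable x y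

lemma integrable_Pf (n : ℕ) (x y : ℝ) :
    IntervalIntegrable (fun θ => Pf b n θ) MeasureTheory.volume x y :=
  (Pf_continuous n).intervalIntegrable x y

lemma integral_cos_mul {j : ℕ} (hj : j ≠ 0) :
    (∫ θ in (-π)..π, Real.cos ((j:ℝ)*θ)) = 0 := by
  have hjR : (j:ℝ) ≠ 0 := Nat.cast_ne_zero.mpr hj
  have hD : ∀ θ ∈ Set.uIcc (-π) π,
      HasDerivAt (fun t => Real.sin ((j:ℝ)*t) / j) (Real.cos ((j:ℝ)*θ)) θ := by
    intro θ _
    have h1 : HasDerivAt (fun t : ℝ => (j:ℝ)*t) (j:ℝ) θ := by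
      simpa using (hasDerivAt_id θ).const_mul (j:ℝ)
    have h2 : HasDerivAt (fun t : ℝ => Real.sin ((j:ℝ)*t)) (Real.cos ((j:ℝ)*θ) * j) θ :=
      (Real.hasDerivAt_sin ((j:ℝ)*θ)).comp θ h1
    have h3 := h2.div_const (j:ℝ)
    have : Real.cos ((j:ℝ)*θ) * (j:ℝ) / (j:ℝ) = Real.cos ((j:ℝ)*θ) := by
      field_simp
    rwa [this] at h3
  rw [intervalIntegral.integral_eq_sub_of_hasDerivAt hD
    (((cos_mul_continuous (j:ℝ))).intervalIntegrable _ _)]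
  have e1 : (j:ℝ) * π = (j:ℕ) * π := by norm_num
  have h1 : Real.sin ((j:ℝ)*π) = 0 := Real.sin_nat_mul_pi j
  have h2 : Real.sin ((j:ℝ)*(-π)) = 0 := by
    have : (j:ℝ)*(-π) = -((j:ℝ)*π) := by ring
    rw [this, Real.sin_neg, h1, neg_zero]
  rw [h1, h2]
  ring

lemma Jf_base (j : ℕ) : Jf b 0 j = if j = 0 then 2*π else 0 := by
  unfold Jf Pf
  simp only [Finset.range_zero, Finset.prod_empty, mul_one]
  by_cases hj : j = 0
  · subst hj
    simp only [if_pos rfl]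
    norm_num
    ring
  · rw [if_neg hj, integral_cos_mul hj]

lemma cos_combo (A βr θ : ℝ) :
    Real.cos (A*θ) * (1 - 2*βr*(1 - Real.cos θ))
    = (1-2*βr) * Real.cos (A*θ) + βr * (Real.cos ((A-1)*θ) + Real.cos ((A+1)*θ)) := by
  have h1 : (A-1)*θ = A*θ - θ := by ring
  have h2 : (A+1)*θ = A*θ + θ := by ring
  rw [h1, h2, Real.cos_sub, Real.cos_add]
  ring

lemma Jf_split (n : ℕ) (A B C : ℝ) (c1 c2 c3 : ℝ) :
    (∫ θ in (-π)..π, (c1 * (Real.cos (A*θ) * Pf b n θ) + c2 * (Real.cos (B*θ) * Pf b n θ)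
        + c3 * (Real.cos (C*θ) * Pf b n θ)))
    = c1 * (∫ θ in (-π)..π, Real.cos (A*θ) * Pf b n θ)
      + c2 * (∫ θ in (-π)..π, Real.cos (B*θ) * Pf b n θ)
      + c3 * (∫ θ in (-π)..π, Real.cos (C*θ) * Pf b n θ) := by
  rw [intervalIntegral.integral_add (((integrable_cos_Pf n A _ _).const_mul c1).add
      ((integrable_cos_Pf n B _ _).const_mul c2)) ((integrable_cos_Pf n C _ _).const_mul c3),
    intervalIntegral.integral_add ((integrable_cos_Pf n A _ _).const_mul c1)
      ((integrable_cos_Pf n B _ _).const_mul c2),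
    intervalIntegral.integral_const_mul, intervalIntegral.integral_const_mul,
    intervalIntegral.integral_const_mul]

lemma Jf_rec_succ (n j : ℕ) :
    Jf b (n+1) (j+1) = (1 - 2 * beta b (n+1)) * Jf b n (j+1)
      + beta b (n+1) * Jf b n j + beta b (n+1) * Jf b n (j+2) := by
  unfold Jf
  have e : ∀ θ : ℝ, Real.cos (((j+1:ℕ):ℝ)*θ) * Pf b (n+1) θ
      = (1 - 2*beta b (n+1)) * (Real.cos (((j+1:ℕ):ℝ)*θ) * Pf b n θ)
        + beta b (n+1) * (Real.cos (((j:ℕ):ℝ)*θ) * Pf b n θ)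
        + beta b (n+1) * (Real.cos (((j+2:ℕ):ℝ)*θ) * Pf b n θ) := by
    intro θ
    rw [Pf_succ, ← mul_assoc, mul_comm (Real.cos (((j+1:ℕ):ℝ)*θ)) (Pf b n θ), mul_assoc,
      cos_combo ((j+1:ℕ):ℝ) (beta b (n+1)) θ]
    have hA1 : ((j+1:ℕ):ℝ) - 1 = ((j:ℕ):ℝ) := by push_cast; ring
    have hA2 : ((j+1:ℕ):ℝ) + 1 = ((j+2:ℕ):ℝ) := by push_cast; ring
    rw [hA1, hA2]
    ring
  rw [intervalIntegral.integral_congr (g := fun θ =>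
      (1 - 2*beta b (n+1)) * (Real.cos (((j+1:ℕ):ℝ)*θ) * Pf b n θ)
        + beta b (n+1) * (Real.cos (((j:ℕ):ℝ)*θ) * Pf b n θ)
        + beta b (n+1) * (Real.cos (((j+2:ℕ):ℝ)*θ) * Pf b n θ)) (fun θ _ => e θ)]
  exact Jf_split n _ _ _ _ _ _

lemma Jf_rec_zero (n : ℕ) :
    Jf b (n+1) 0 = (1 - 2 * beta b (n+1)) * Jf b n 0 + 2 * beta b (n+1) * Jf b n 1 := by
  unfold Jf
  have e : ∀ θ : ℝ, Real.cos (((0:ℕ):ℝ)*θ) * Pf b (n+1) θ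
      = (1 - 2*beta b (n+1)) * (Real.cos (((0:ℕ):ℝ)*θ) * Pf b n θ)
        + beta b (n+1) * (Real.cos (((1:ℕ):ℝ)*θ) * Pf b n θ)
        + beta b (n+1) * (Real.cos (((1:ℕ):ℝ)*θ) * Pf b n θ) := by
    intro θ
    rw [Pf_succ, ← mul_assoc, mul_comm (Real.cos (((0:ℕ):ℝ)*θ)) (Pf b n θ), mul_assoc,
      cos_combo ((0:ℕ):ℝ) (beta b (n+1)) θ]
    have hA1 : (((0:ℕ):ℝ) - 1) * θ = -(((1:ℕ):ℝ)*θ) := by push_cast; ring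
    have hA2 : ((0:ℕ):ℝ) + 1 = ((1:ℕ):ℝ) := by norm_num
    rw [hA1, hA2, Real.cos_neg]
    ring
  rw [intervalIntegral.integral_congr (g := fun θ =>
      (1 - 2*beta b (n+1)) * (Real.cos (((0:ℕ):ℝ)*θ) * Pf b n θ)
        + beta b (n+1) * (Real.cos (((1:ℕ):ℝ)*θ) * Pf b n θ)
        + beta b (n+1) * (Real.cos (((1:ℕ):ℝ)*θ) * Pf b n θ)) (fun θ _ => e θ)]
  rw [Jf_split n _ _ _ _ _ _]
  ring

lemma rho_eq_Jf (n : ℕ) : ∀ j, 2 * π * rho b n j = Jf b n j := by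
  induction n with
  | zero =>
    intro j
    rw [Jf_base]
    unfold rho
    by_cases hj : j = 0
    · subst hj
      rw [show (0:ℕ)+1 = 1 from rfl, Finset.sum_range_one]
      simp only [qk, Nat.add_zero]
      norm_num
    · rw [if_neg hj, show (0:ℕ)+1 = 1 from rfl, Finset.sum_range_one]
      have h0 : qk b 0 (0+j) = 0 := by
        simp only [qk, Nat.zero_add]
        rw [if_neg hj]
      rw [h0]
      ring
  | succ n ih =>
    intro j
    cases j with
    | zero =>
      rw [rho_rec_zero, Jf_rec_zero, ← ih 0, ← ih 1]
      ring
    | succ j =>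
      rw [rho_rec_succ, Jf_rec_succ, ← ih j, ← ih (j+1), ← ih (j+2)]
      ring


lemma tauW_nonneg (hb : ∀ i, b i ∈ Set.Icc (0:ℝ) 1) (n : ℕ) : 0 ≤ tauW b n :=
  Finset.sum_nonneg (fun i _ => (beta_mem hb (i+1)).1)

lemma Del_diag_le (hb : ∀ i, b i ∈ Set.Icc (0:ℝ) 1) (n : ℕ) {δ : ℝ}
    (hδ0 : 0 < δ) (hδ : δ ≤ π/2) :
    Del b n n ≤ 2*δ/π + 2*(1 + 2 * tauW b n * (1 - Real.cos δ))⁻¹ := by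
  have hπ := Real.pi_pos
  have hδπ : δ ≤ π := by linarith
  have hτ0 : 0 ≤ tauW b n := tauW_nonneg hb n
  have hcδ : Real.cos δ ≤ 1 := Real.cos_le_one δ
  set κ := (1 + 2 * tauW b n * (1 - Real.cos δ))⁻¹ with hκ
  have hden : (0:ℝ) < 1 + 2 * tauW b n * (1 - Real.cos δ) := by nlinarith
  have hκ0 : 0 ≤ κ := le_of_lt (inv_pos.mpr hden)
  -- pointwise bound on the far region
  have hfar : ∀ θ : ℝ, Real.cos θ ≤ Real.cos δ → Pf b n θ ≤ κ := by
    intro θ hθ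
    refine le_trans (Pf_le_inv hb n θ) ?_
    rw [hκ]
    apply inv_anti₀ hden
    nlinarith
  have hJ1 : Jf b n 1 ≤ Jf b n 0 := by
    unfold Jf
    apply intervalIntegral.integral_mono_on (by linarith)
      (integrable_cos_Pf n _ _ _) (integrable_cos_Pf n _ _ _)
    intro θ _
    calc Real.cos (((1:ℕ):ℝ)*θ) * Pf b n θ ≤ 1 * Pf b n θ :=
          mul_le_mul_of_nonneg_right (Real.cos_le_one _) (Pf_nonneg hb n θ)
      _ = Real.cos (((0:ℕ):ℝ)*θ) * Pf b n θ := by norm_num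
  have hJ0 : Jf b n 0 = ∫ θ in (-π)..π, Pf b n θ := by
    unfold Jf
    apply intervalIntegral.integral_congr
    intro θ _
    norm_num
  have hsplit : (∫ θ in (-π)..π, Pf b n θ)
      = (∫ θ in (-π)..(-δ), Pf b n θ) + (∫ θ in (-δ)..δ, Pf b n θ)
        + (∫ θ in δ..π, Pf b n θ) := by
    rw [intervalIntegral.integral_add_adjacent_intervals (integrable_Pf n _ _) (integrable_Pf n _ _),
      intervalIntegral.integral_add_adjacent_intervals (integrable_Pf n _ _) (integrable_Pf n _ _)]
  have B2 : (∫ θ in (-δ)..δ, Pf b n θ) ≤ 2*δ := by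
    have : (∫ θ in (-δ)..δ, (1:ℝ)) = 2*δ := by
      rw [intervalIntegral.integral_const, smul_eq_mul]
      ring
    rw [← this]
    apply intervalIntegral.integral_mono_on (by linarith)
      (integrable_Pf n _ _) (intervalIntegrable_const)
    intro θ _
    exact Pf_le_one hb n θ
  have B3 : (∫ θ in δ..π, Pf b n θ) ≤ (π - δ)*κ := by
    have : (∫ θ in δ..π, κ) = (π - δ)*κ := by
      rw [intervalIntegral.integral_const, smul_eq_mul]
    rw [← this]
    apply intervalIntegral.integral_mono_on (by linarith)
      (integrable_Pf n _ _) (intervalIntegrable_const)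
    intro θ hθ
    apply hfar
    exact Real.cos_le_cos_of_nonneg_of_le_pi hδ0.le hθ.2 hθ.1
  have B1 : (∫ θ in (-π)..(-δ), Pf b n θ) ≤ (π - δ)*κ := by
    have : (∫ θ in (-π)..(-δ), κ) = (π - δ)*κ := by
      rw [intervalIntegral.integral_const, smul_eq_mul]
      ring
    rw [← this]
    apply intervalIntegral.integral_mono_on (by linarith)
      (integrable_Pf n _ _) (intervalIntegrable_const)
    intro θ hθ
    apply hfar
    rw [← Real.cos_neg θ]
    apply Real.cos_le_cos_of_nonneg_of_le_pi hδ0.le (by linarith [hθ.1]) (by linarith [hθ.2])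
  have hdel : 2*π*(Del b n n) = Jf b n 0 + Jf b n 1 := by
    rw [Del_diag]
    rw [mul_add, rho_eq_Jf n 0, rho_eq_Jf n 1]
  have hchain : 2*π*(Del b n n) ≤ 4*δ + 4*π*κ := by
    rw [hdel]
    have h1 : Jf b n 0 + Jf b n 1 ≤ 2 * Jf b n 0 := by linarith
    have h2 : Jf b n 0 ≤ 2*δ + 2*(π - δ)*κ := by
      rw [hJ0, hsplit]
      linarith
    have h3 : (π - δ)*κ ≤ π*κ := by nlinarith
    linarith
  have h2π : (0:ℝ) < 2*π := by linarith
  have hgoal : 2*π*(2*δ/π + 2*κ) = 4*δ + 4*π*κ := by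
    field_simp
    ring
  nlinarith [hchain, hgoal]

lemma Del_small (hb : ∀ i, b i ∈ Set.Icc (0:ℝ) 1) {ε : ℝ} (hε : 0 < ε) :
    ∃ τ₀ : ℝ, ∀ n, τ₀ ≤ tauW b n → Del b n n ≤ ε := by
  have hπ := Real.pi_pos
  set δ := min (π/2) (π*ε/4) with hδdef
  have hδ0 : 0 < δ := lt_min (by linarith) (by positivity)
  have hδ : δ ≤ π/2 := min_le_left _ _
  have hδε : 2*δ/π ≤ ε/2 := by
    have h1 : δ ≤ π*ε/4 := min_le_right _ _
    rw [div_le_div_iff₀ (by linarith) (by norm_num)]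
    nlinarith
  have hcos1 : Real.cos δ < 1 := by
    have h0 : Real.cos δ < Real.cos 0 := by
      apply Real.strictAntiOn_cos ⟨le_refl 0, hπ.le⟩ ⟨hδ0.le, by linarith⟩ hδ0
    rwa [Real.cos_zero] at h0
  have hc0 : 0 < 1 - Real.cos δ := by linarith
  refine ⟨2/(ε*(1 - Real.cos δ)), ?_⟩
  intro n hn
  have hτ0 : 0 ≤ tauW b n := tauW_nonneg hb n
  refine le_trans (Del_diag_le hb n hδ0 hδ) ?_
  have hκ : 2*(1 + 2 * tauW b n * (1 - Real.cos δ))⁻¹ ≤ ε/2 := by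
    have hden : (0:ℝ) < 1 + 2 * tauW b n * (1 - Real.cos δ) := by nlinarith
    have hbig : 4/ε ≤ 1 + 2 * tauW b n * (1 - Real.cos δ) := by
      have : 2 * (2/(ε*(1 - Real.cos δ))) * (1 - Real.cos δ) = 4/ε := by
        field_simp
        ring
      nlinarith [mul_le_mul_of_nonneg_right hn (by linarith : (0:ℝ) ≤ 2*(1 - Real.cos δ))]
    have hinv : (1 + 2 * tauW b n * (1 - Real.cos δ))⁻¹ ≤ ε/4 := by
      rw [inv_le_iff_one_le_mul₀ hden]
      have h4ε : (0:ℝ) < 4/ε := by positivity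
      calc (1:ℝ) = (4/ε) * (ε/4) := by field_simp
        _ ≤ (1 + 2 * tauW b n * (1 - Real.cos δ)) * (ε/4) := by
            apply mul_le_mul_of_nonneg_right hbig (by positivity)
        _ = (ε/4) * (1 + 2 * tauW b n * (1 - Real.cos δ)) := by ring
    linarith
  linarith


variable {X : Type*} [NormedAddCommGroup X] [NormedSpace ℝ X]

/-- the exact KM sequence with coefficients `bw` started at `x0` -/
def kmseq (T : X → X) (bw : ℕ → ℝ) (x0 : X) : ℕ → X
  | 0 => x0
  | (k+1) => (1 - bw (k+1)) • kmseq T bw x0 k + bw (k+1) • T (kmseq T bw x0 k)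

/-- the master majorization: distances in the exact KM iteration are dominated by
`D` times the explicit probabilistic kernels `Phi`/`Del`. -/
lemma majorize (C : Set X) (T : X → X)
    (hT : ∀ x ∈ C, ∀ y ∈ C, ‖T x - T y‖ ≤ ‖x - y‖)
    (hb : ∀ i, b i ∈ Set.Icc (0:ℝ) 1) (y : ℕ → X) (hyC : ∀ n, y n ∈ C)
    (hyrec : ∀ n, y (n+1) = (1 - b (n+1)) • y n + b (n+1) • T (y n))
    (D : ℝ) (hD : ∀ n, ‖T (y n) - y 0‖ ≤ D) :
    ∀ n, (∀ m, m ≤ n → ‖y n - y m‖ ≤ D * Phi b n m)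
      ∧ (∀ m, m ≤ n → ‖T (y n) - y m‖ ≤ D * Del b n m) := by
  have hD0 : 0 ≤ D := le_trans (norm_nonneg _) (hD 0)
  intro n
  induction n with
  | zero =>
    constructor
    · intro m hm
      have hm0 : m = 0 := by omega
      subst hm0
      rw [Phi_diag, mul_zero, sub_self, norm_zero]
    · intro m hm
      have hm0 : m = 0 := by omega
      subst hm0
      rw [Del_zero, mul_one]
      exact hD 0
  | succ n ih =>
    obtain ⟨IHf, IHc⟩ := ih
    have hb1 : 0 ≤ b (n+1) := (hb (n+1)).1
    have hb2 : b (n+1) ≤ 1 := (hb (n+1)).2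
    have hf : ∀ m, m ≤ n+1 → ‖y (n+1) - y m‖ ≤ D * Phi b (n+1) m := by
      intro m hm
      rcases Nat.lt_or_ge m (n+1) with hlt | hge
      · have hmn : m ≤ n := by omega
        have hid : y (n+1) - y m
            = (1 - b (n+1)) • (y n - y m) + b (n+1) • (T (y n) - y m) := by
          rw [hyrec n]; module
        calc ‖y (n+1) - y m‖
            ≤ ‖(1 - b (n+1)) • (y n - y m)‖ + ‖b (n+1) • (T (y n) - y m)‖ := by
              rw [hid]; exact norm_add_le _ _
          _ = (1 - b (n+1)) * ‖y n - y m‖ + b (n+1) * ‖T (y n) - y m‖ := by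
              rw [norm_smul, norm_smul, Real.norm_eq_abs, Real.norm_eq_abs,
                abs_of_nonneg (by linarith), abs_of_nonneg hb1]
          _ ≤ (1 - b (n+1)) * (D * Phi b n m) + b (n+1) * (D * Del b n m) := by
              apply add_le_add
              · exact mul_le_mul_of_nonneg_left (IHf m hmn) (by linarith)
              · exact mul_le_mul_of_nonneg_left (IHc m hmn) hb1
          _ = D * Phi b (n+1) m := by rw [Phi_rec]; ring
      · have hmeq : m = n+1 := by omega
        subst hmeq
        rw [Phi_diag, mul_zero, sub_self, norm_zero]
    refine ⟨hf, ?_⟩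
    intro m
    induction m with
    | zero =>
      intro _
      rw [Del_zero, mul_one]
      exact hD (n+1)
    | succ m ihm =>
      intro hm
      have hm1 : m ≤ n+1 := by omega
      have hc1 : 0 ≤ b (m+1) := (hb (m+1)).1
      have hc2 : b (m+1) ≤ 1 := (hb (m+1)).2
      have hid : T (y (n+1)) - y (m+1)
          = (1 - b (m+1)) • (T (y (n+1)) - y m) + b (m+1) • (T (y (n+1)) - T (y m)) := by
        rw [hyrec m]; module
      calc ‖T (y (n+1)) - y (m+1)‖
          ≤ ‖(1 - b (m+1)) • (T (y (n+1)) - y m)‖ + ‖b (m+1) • (T (y (n+1)) - T (y m))‖ := by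
            rw [hid]; exact norm_add_le _ _
        _ = (1 - b (m+1)) * ‖T (y (n+1)) - y m‖ + b (m+1) * ‖T (y (n+1)) - T (y m)‖ := by
            rw [norm_smul, norm_smul, Real.norm_eq_abs, Real.norm_eq_abs,
              abs_of_nonneg (by linarith), abs_of_nonneg hc1]
        _ ≤ (1 - b (m+1)) * (D * Del b (n+1) m) + b (m+1) * ‖y (n+1) - y m‖ := by
            apply add_le_add
            · exact mul_le_mul_of_nonneg_left (ihm hm1) (by linarith)
            · exact mul_le_mul_of_nonneg_left (hT _ (hyC (n+1)) _ (hyC m)) hc1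
        _ ≤ (1 - b (m+1)) * (D * Del b (n+1) m) + b (m+1) * (D * Phi b (n+1) m) := by
            apply add_le_add le_rfl
            exact mul_le_mul_of_nonneg_left (hf m hm1) hc1
        _ = D * Del b (n+1) (m+1) := by rw [Del_rec]; ring

lemma resid_le (C : Set X) (T : X → X)
    (hT : ∀ x ∈ C, ∀ y ∈ C, ‖T x - T y‖ ≤ ‖x - y‖)
    (hb : ∀ i, b i ∈ Set.Icc (0:ℝ) 1) (y : ℕ → X) (hyC : ∀ n, y n ∈ C)
    (hyrec : ∀ n, y (n+1) = (1 - b (n+1)) • y n + b (n+1) • T (y n))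
    (D : ℝ) (hD : ∀ n, ‖T (y n) - y 0‖ ≤ D) (n : ℕ) :
    ‖T (y n) - y n‖ ≤ D * Del b n n :=
  (majorize C T hT hb y hyC hyrec D hD n).2 n le_rfl


lemma sum_range_add' (f : ℕ → ℝ) (M k : ℕ) :
    ∑ i ∈ range (M+k), f i = ∑ i ∈ range M, f i + ∑ i ∈ range k, f (M+i) := by
  induction k with
  | zero => simp
  | succ k ih =>
    rw [show M + (k+1) = (M+k)+1 from rfl, Finset.sum_range_succ, ih, Finset.sum_range_succ]
    ring

lemma icc_sum_eq (g : ℕ → ℝ) (n : ℕ) : ∑ k ∈ Icc 1 n, g k = ∑ i ∈ range n, g (i+1) := by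
  induction n with
  | zero => simp
  | succ n ih => rw [Finset.sum_Icc_succ_top (by omega), ih, Finset.sum_range_succ]

end KM6

open KM6

/-- for the inexact KM iteration with `x n ∈ C` and `‖T x n - x 0‖ ≤ κ`,
if `τ n = ∑_{k=1}^n α k (1-α k) → ∞`, `‖e n‖ → 0` and `∑_k α k ‖e k‖ < ∞`, then
`‖x n - T x n‖ → 0`. -/
theorem stmt6 {X : Type*} [NormedAddCommGroup X] [NormedSpace ℝ X] [CompleteSpace X]
    (C : Set X) (hC : IsClosed C) (hconv : Convex ℝ C)
    (T : X → X) (hTmaps : ∀ x ∈ C, T x ∈ C)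
    (hT : ∀ x ∈ C, ∀ y ∈ C, ‖T x - T y‖ ≤ ‖x - y‖)
    (α : ℕ → ℝ) (hα : ∀ n, α n ∈ Set.Icc (0:ℝ) 1)
    (e : ℕ → X)
    (x : ℕ → X) (hxC : ∀ n, x n ∈ C)
    (hrec : ∀ n, x (n + 1)
      = (1 - α (n + 1)) • x n + α (n + 1) • (T (x n) + e (n + 1)))
    (κ : ℝ) (hbound : ∀ n, ‖T (x n) - x 0‖ ≤ κ)
    (hτ : Tendsto (fun n => ∑ k ∈ Finset.Icc 1 n, α k * (1 - α k)) atTop atTop)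
    (he : Tendsto (fun n => ‖e n‖) atTop (nhds 0))
    (hsum : Summable (fun k => α (k + 1) * ‖e (k + 1)‖)) :
    Tendsto (fun n => ‖x n - T (x n)‖) atTop (nhds 0) := by
  classical
  set s : ℕ → ℝ := fun k => α (k+1) * ‖e (k+1)‖ with hs
  have hs0 : ∀ k, 0 ≤ s k := fun k => mul_nonneg (hα (k+1)).1 (norm_nonneg _)
  set E : ℝ := ∑' k, s k with hE
  have hSP : ∀ N, ∑ i ∈ range N, s i ≤ E :=
    fun N => Summable.sum_le_tsum (range N) (fun i _ => hs0 i) hsum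
  have hE0 : 0 ≤ E := tsum_nonneg hs0
  have hκ0 : 0 ≤ κ := le_trans (norm_nonneg _) (hbound 0)
  -- a-priori bound on the trajectory
  have hxbound : ∀ n, ‖x n - x 0‖ ≤ κ + E := by
    have key : ∀ n, ‖x n - x 0‖ ≤ κ + ∑ i ∈ range n, s i := by
      intro n
      induction n with
      | zero => simpa using hκ0
      | succ n ih =>
        have ha1 := (hα (n+1)).1
        have ha2 := (hα (n+1)).2
        have hP0 : 0 ≤ ∑ i ∈ range n, s i := Finset.sum_nonneg (fun i _ => hs0 i)
        have hid : x (n+1) - x 0 = (1 - α (n+1)) • (x n - x 0)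
            + α (n+1) • (T (x n) - x 0) + α (n+1) • e (n+1) := by
          rw [hrec n]; module
        calc ‖x (n+1) - x 0‖
            ≤ ‖(1 - α (n+1)) • (x n - x 0)‖ + ‖α (n+1) • (T (x n) - x 0)‖
              + ‖α (n+1) • e (n+1)‖ := by rw [hid]; exact norm_add₃_le
          _ = (1 - α (n+1)) * ‖x n - x 0‖ + α (n+1) * ‖T (x n) - x 0‖
              + α (n+1) * ‖e (n+1)‖ := by
              rw [norm_smul, norm_smul, norm_smul, Real.norm_eq_abs,
                abs_of_nonneg (by linarith : (0:ℝ) ≤ 1 - α (n+1)), Real.norm_eq_abs,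
                abs_of_nonneg ha1]
          _ ≤ (1 - α (n+1)) * (κ + ∑ i ∈ range n, s i) + α (n+1) * κ + s n := by
              apply add_le_add
              apply add_le_add
              · exact mul_le_mul_of_nonneg_left ih (by linarith)
              · exact mul_le_mul_of_nonneg_left (hbound n) ha1
              · exact le_refl _
          _ ≤ κ + ∑ i ∈ range (n+1), s i := by
              rw [Finset.sum_range_succ]
              nlinarith
    intro n
    exact le_trans (key n) (by linarith [hSP n])
  -- start of the ε-argument
  rw [Metric.tendsto_atTop]
  intro ε hε
  set D : ℝ := 2*κ + 2*E + 1 with hD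
  have hD0 : (0:ℝ) < D := by linarith
  -- choose the window base M with small error tail
  have hten : Tendsto (fun N => ∑ i ∈ range N, s i) atTop (nhds E) :=
    hsum.hasSum.tendsto_sum_nat
  rw [Metric.tendsto_atTop] at hten
  obtain ⟨M, hM⟩ := hten (ε/8) (by positivity)
  have hMd := hM M le_rfl
  rw [Real.dist_eq] at hMd
  have hσsmall : E - ∑ i ∈ range M, s i < ε/8 := by
    have h1 : E - ∑ i ∈ range M, s i ≤ |∑ i ∈ range M, s i - E| := by
      rw [abs_sub_comm]; exact le_abs_self _
    linarith
  set σ : ℝ := E - ∑ i ∈ range M, s i with hσ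
  have hσ0 : 0 ≤ σ := by have := hSP M; linarith
  have hσE : σ ≤ E := by
    have : 0 ≤ ∑ i ∈ range M, s i := Finset.sum_nonneg (fun i _ => hs0 i)
    rw [hσ]; linarith
  -- window coefficients and exact comparison sequence
  set bw : ℕ → ℝ := fun i => α (M + i) with hbw
  have hbw01 : ∀ i, bw i ∈ Set.Icc (0:ℝ) 1 := fun i => hα (M+i)
  set y : ℕ → X := kmseq T bw (x M) with hy
  have hy0 : y 0 = x M := rfl
  have hyrec : ∀ k, y (k+1) = (1 - bw (k+1)) • y k + bw (k+1) • T (y k) := fun k => rfl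
  have hyC : ∀ k, y k ∈ C := by
    intro k
    induction k with
    | zero => exact hxC M
    | succ k ih =>
      rw [hyrec k]
      have h1 := (hbw01 (k+1)).1
      have h2 := (hbw01 (k+1)).2
      exact hconv ih (hTmaps _ ih) (by linarith) (by linarith) (by ring)
  -- comparison bound
  have hcomp : ∀ k, ‖x (M+k) - y k‖ ≤ σ := by
    have key : ∀ k, ‖x (M+k) - y k‖ ≤ ∑ i ∈ range k, s (M+i) := by
      intro k
      induction k with
      | zero => simp [hy0]
      | succ k ih =>
        have ha1 := (hα (M+k+1)).1
        have ha2 := (hα (M+k+1)).2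
        have hid : x (M+(k+1)) - y (k+1) = (1 - α (M+k+1)) • (x (M+k) - y k)
            + α (M+k+1) • (T (x (M+k)) - T (y k)) + α (M+k+1) • e (M+k+1) := by
          rw [show M+(k+1) = (M+k)+1 from rfl, hrec (M+k), hyrec k]
          simp only [hbw]
          simp only [show M + (k+1) = M+k+1 from rfl]
          module
        calc ‖x (M+(k+1)) - y (k+1)‖
            ≤ ‖(1 - α (M+k+1)) • (x (M+k) - y k)‖
              + ‖α (M+k+1) • (T (x (M+k)) - T (y k))‖
              + ‖α (M+k+1) • e (M+k+1)‖ := by rw [hid]; exact norm_add₃_le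
          _ = (1 - α (M+k+1)) * ‖x (M+k) - y k‖
              + α (M+k+1) * ‖T (x (M+k)) - T (y k)‖
              + α (M+k+1) * ‖e (M+k+1)‖ := by
              rw [norm_smul, norm_smul, norm_smul, Real.norm_eq_abs,
                abs_of_nonneg (by linarith : (0:ℝ) ≤ 1 - α (M+k+1)), Real.norm_eq_abs,
                abs_of_nonneg ha1]
          _ ≤ (1 - α (M+k+1)) * ‖x (M+k) - y k‖
              + α (M+k+1) * ‖x (M+k) - y k‖ + s (M+k) := by
              apply add_le_add
              apply add_le_add
              · exact le_refl _
              · exact mul_le_mul_of_nonneg_left (hT _ (hxC (M+k)) _ (hyC k)) ha1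
              · exact le_refl _
          _ ≤ ∑ i ∈ range (k+1), s (M+i) := by
              rw [Finset.sum_range_succ]
              nlinarith [ih]
    intro k
    refine le_trans (key k) ?_
    have hsum_eq := sum_range_add' s M k
    have := hSP (M+k)
    rw [hσ]
    linarith
  -- D-bound for the window sequence
  have hDw : ∀ k, ‖T (y k) - y 0‖ ≤ D := by
    intro k
    have hid : T (y k) - y 0 = (T (y k) - T (x (M+k))) + (T (x (M+k)) - x 0)
        + (x 0 - x M) := by rw [hy0]; abel
    calc ‖T (y k) - y 0‖
        ≤ ‖T (y k) - T (x (M+k))‖ + ‖T (x (M+k)) - x 0‖ + ‖x 0 - x M‖ := by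
          rw [hid]; exact norm_add₃_le
      _ ≤ ‖y k - x (M+k)‖ + κ + (κ + E) := by
          apply add_le_add
          apply add_le_add
          · exact hT _ (hyC k) _ (hxC (M+k))
          · exact hbound (M+k)
          · rw [norm_sub_rev]; exact hxbound M
      _ ≤ D := by
          rw [norm_sub_rev]
          have := hcomp k
          rw [hD]
          linarith
  -- majorization: residues of y dominated by D * Del
  have hmaj : ∀ k, ‖T (y k) - y k‖ ≤ D * Del bw k k :=
    resid_le C T hT hbw01 y hyC hyrec D hDw
  -- the window τ tends to infinity
  have hG : Tendsto (fun n => ∑ i ∈ range n, α (i+1) * (1 - α (i+1))) atTop atTop := by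
    apply hτ.congr
    intro n
    exact icc_sum_eq (fun k => α k * (1 - α k)) n
  have htauw : ∀ k, tauW bw k
      = (∑ i ∈ range (M+k), α (i+1) * (1 - α (i+1)))
        - (∑ i ∈ range M, α (i+1) * (1 - α (i+1))) := by
    intro k
    have h1 : tauW bw k = ∑ i ∈ range k, α (M+i+1) * (1 - α (M+i+1)) := rfl
    rw [h1, sum_range_add' (fun i => α (i+1) * (1 - α (i+1))) M k]
    ring
  have htau : Tendsto (fun k => tauW bw k) atTop atTop := by
    have hMk : Tendsto (fun k : ℕ => M + k) atTop atTop :=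
      tendsto_atTop_mono (fun k => Nat.le_add_left k M) tendsto_id
    have h1 : Tendsto (fun k => ∑ i ∈ range (M+k), α (i+1) * (1 - α (i+1))) atTop atTop :=
      hG.comp hMk
    have h2 := tendsto_atTop_add_const_right atTop
      (-(∑ i ∈ range M, α (i+1) * (1 - α (i+1)))) h1
    apply h2.congr
    intro k
    rw [htauw k]
    ring
  -- apply the kernel decay
  obtain ⟨τ₀, hτ₀⟩ := Del_small hbw01 (show (0:ℝ) < ε/(2*D) by positivity)
  obtain ⟨K, hK⟩ := Filter.eventually_atTop.mp (Filter.tendsto_atTop.mp htau τ₀)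
  refine ⟨M + K, ?_⟩
  intro n hn
  obtain ⟨k, hkK, rfl⟩ : ∃ k, K ≤ k ∧ n = M + k := ⟨n - M, by omega, by omega⟩
  have hdel : Del bw k k ≤ ε/(2*D) := hτ₀ k (hK k hkK)
  have hres : ‖T (y k) - y k‖ ≤ ε/2 := by
    refine le_trans (hmaj k) ?_
    calc D * Del bw k k ≤ D * (ε/(2*D)) :=
          mul_le_mul_of_nonneg_left hdel hD0.le
      _ = ε/2 := by field_simp
  have hid : x (M+k) - T (x (M+k)) = (x (M+k) - y k) + (y k - T (y k))
      + (T (y k) - T (x (M+k))) := by abel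
  have hfinal : ‖x (M+k) - T (x (M+k))‖ < ε := by
    calc ‖x (M+k) - T (x (M+k))‖
        ≤ ‖x (M+k) - y k‖ + ‖y k - T (y k)‖ + ‖T (y k) - T (x (M+k))‖ := by
          rw [hid]; exact norm_add₃_le
      _ ≤ σ + ε/2 + ‖y k - x (M+k)‖ := by
          apply add_le_add
          apply add_le_add
          · exact hcomp k
          · rw [norm_sub_rev]; exact hres
          · exact hT _ (hyC k) _ (hxC (M+k))
      _ ≤ σ + ε/2 + σ := by
          rw [norm_sub_rev]
          linarith [hcomp k]
      _ < ε := by linarith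
  rw [Real.dist_eq, sub_zero, abs_of_nonneg (norm_nonneg _)]
  exact hfinal
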